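/- Let Y be a finite type with at least two elements and fix y ∈ Y. For φ equal to either the symmetric linear-core surrogate Φ̄ or the one-sided linear-core surrogate Φ̃, the multi-class sum loss L : (Y → ℝ) → ℝ defined by L(v) = Σ_{y' ≠ y} φ(v(y) − v(y')) is convex, and it is continuously differentiable as a function on the Euclidean space ℝ^Y. -/

import Mathlib

/-- The symmetric linear-core surrogate `Φ̄`. -/
noncomputable def barPhi (Φ : ℝ → ℝ) (u : ℝ) : ℝ :=
  if 1 < u then Φ (1 - u) / deriv Φ 0
  else if u < -1 then Φ (-1 - u) / deriv Φ 0 + 2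
  else -u + 1 + Φ 0 / deriv Φ 0

/-- The one-sided linear-core surrogate `Φ̃`. -/
noncomputable def tildePhi (Φ : ℝ → ℝ) (u : ℝ) : ℝ :=
  if 1 < u then Φ (1 - u) / deriv Φ 0
  else -u + 1 + Φ 0 / deriv Φ 0

section Aux

open Set Filter

/-- A differentiable function with monotone derivative has continuous derivative. -/
lemma continuous_deriv_of_monotone {f : ℝ → ℝ} (hf : Differentiable ℝ f)
    (hm : Monotone (deriv f)) : Continuous (deriv f) := by
  set g := deriv f with hgdef
  have himg : ∀ c d : ℝ, Set.OrdConnected (g '' Set.Icc c d) :=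
    fun c d => Set.ordConnected_Icc.image_deriv (fun x _ => hf x)
  rw [continuous_iff_continuousAt]
  intro a
  rw [continuousAt_iff_continuous_left_right]
  constructor
  · by_cases h : ∃ c, g c < g a
    · obtain ⟨c, hc⟩ := h
      have hca : c ≤ a := by
        by_contra hca
        exact absurd (hm (le_of_not_ge hca)) (not_le.2 hc)
      refine continuousWithinAt_left_of_monotoneOn_of_exists_between
        (hm.monotoneOn _) self_mem_nhdsWithin ?_
      intro b hb
      obtain ⟨m, hm1, hm2⟩ := exists_between (max_lt hb hc)
      have hmem : m ∈ g '' Set.Icc c a := (himg c a).out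
        (Set.mem_image_of_mem g (Set.left_mem_Icc.2 hca))
        (Set.mem_image_of_mem g (Set.right_mem_Icc.2 hca))
        ⟨((le_max_right b (g c)).trans hm1.le), hm2.le⟩
      obtain ⟨x, hxs, hx⟩ := hmem
      exact ⟨x, hxs.2, hx ▸ ⟨(le_max_left b (g c)).trans_lt hm1, hm2⟩⟩
    · push_neg at h
      exact continuousWithinAt_const.congr
        (fun x hx => (le_antisymm (hm hx) (h x))) rfl
  · by_cases h : ∃ c, g a < g c
    · obtain ⟨c, hc⟩ := h
      have hca : a ≤ c := by
        by_contra hca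
        exact absurd (hm (le_of_not_ge hca)) (not_le.2 hc)
      refine continuousWithinAt_right_of_monotoneOn_of_exists_between
        (hm.monotoneOn _) self_mem_nhdsWithin ?_
      intro b hb
      obtain ⟨m, hm1, hm2⟩ := exists_between (lt_min hb hc)
      have hmem : m ∈ g '' Set.Icc a c := (himg a c).out
        (Set.mem_image_of_mem g (Set.left_mem_Icc.2 hca))
        (Set.mem_image_of_mem g (Set.right_mem_Icc.2 hca))
        ⟨hm1.le, hm2.le.trans (min_le_right b (g c))⟩
      obtain ⟨x, hxs, hx⟩ := hmem
      exact ⟨x, hxs.1, hx ▸ ⟨hm1, hm2.trans_le (min_le_left b (g c))⟩⟩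
    · push_neg at h
      exact continuousWithinAt_const.congr
        (fun x hx => (le_antisymm (h x) (hm hx))) rfl

lemma convex_contDiff_of_hasDerivAt {f D : ℝ → ℝ} (hD : ∀ u, HasDerivAt f (D u) u)
    (hc : Continuous D) (hm : Monotone D) :
    ConvexOn ℝ Set.univ f ∧ ContDiff ℝ 1 f := by
  have hder : deriv f = D := funext fun u => (hD u).deriv
  have hdf : Differentiable ℝ f := fun u => (hD u).differentiableAt
  exact ⟨Monotone.convexOn_univ_of_deriv hdf (hder ▸ hm),
    contDiff_one_iff_deriv.mpr ⟨hdf, hder ▸ hc⟩⟩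

variable {Φ : ℝ → ℝ}

lemma hF_aux (hdiff : Differentiable ℝ Φ) (u : ℝ) :
    HasDerivAt (fun u => Φ (1 - u) / deriv Φ 0) (-deriv Φ (1 - u) / deriv Φ 0) u := by
  have h1 : HasDerivAt (fun u : ℝ => 1 - u) (-1) u := by
    simpa using (hasDerivAt_id u).const_sub 1
  have := ((hdiff (1 - u)).hasDerivAt.comp u h1).div_const (deriv Φ 0)
  simpa [mul_neg_one, neg_div] using this

lemma hG_aux (hdiff : Differentiable ℝ Φ) (u : ℝ) :
    HasDerivAt (fun u => Φ (-1 - u) / deriv Φ 0 + 2) (-deriv Φ (-1 - u) / deriv Φ 0) u := by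
  have h1 : HasDerivAt (fun u : ℝ => -1 - u) (-1) u := by
    simpa using (hasDerivAt_id u).const_sub (-1)
  have := (((hdiff (-1 - u)).hasDerivAt.comp u h1).div_const (deriv Φ 0)).add_const 2
  simpa [mul_neg_one, neg_div] using this

lemma hL_aux (Φ : ℝ → ℝ) (u : ℝ) :
    HasDerivAt (fun u : ℝ => -u + 1 + Φ 0 / deriv Φ 0) (-1) u := by
  simpa using (((hasDerivAt_id u).neg).add_const 1).add_const (Φ 0 / deriv Φ 0)

lemma hd1_aux (hne : deriv Φ 0 ≠ 0) : -deriv Φ (1 - 1) / deriv Φ 0 = -1 := by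
  rw [show (1:ℝ) - 1 = 0 by norm_num, neg_div, div_self hne]

lemma hd2_aux (hne : deriv Φ 0 ≠ 0) : -deriv Φ (-1 - -1) / deriv Φ 0 = -1 := by
  rw [show (-1:ℝ) - -1 = 0 by norm_num, neg_div, div_self hne]

lemma tilde_hasDerivAt (hdiff : Differentiable ℝ Φ) (hd0 : 0 < deriv Φ 0) (u : ℝ) :
    HasDerivAt (tildePhi Φ)
      (if 1 < u then -deriv Φ (1 - u) / deriv Φ 0 else -1) u := by
  have hne := ne_of_gt hd0
  rcases lt_trichotomy u 1 with hu | rfl | hu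
  · rw [if_neg (not_lt.mpr hu.le)]
    refine (hL_aux Φ u).congr_of_eventuallyEq ?_
    filter_upwards [Iio_mem_nhds hu] with x hx
    simp [tildePhi, not_lt.mpr (le_of_lt (Set.mem_Iio.mp hx))]
  · rw [if_neg (lt_irrefl 1)]
    have hleft : HasDerivWithinAt (tildePhi Φ) (-1) (Set.Iic 1) 1 :=
      ((hL_aux Φ 1).hasDerivWithinAt).congr
        (fun x hx => by simp [tildePhi, not_lt.mpr (Set.mem_Iic.mp hx)])
        (by simp [tildePhi])
    have hright : HasDerivWithinAt (tildePhi Φ) (-1) (Set.Ici 1) 1 := by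
      refine (hd1_aux hne ▸ (hF_aux hdiff 1).hasDerivWithinAt).congr ?_ ?_
      · intro x hx
        rcases eq_or_lt_of_le (Set.mem_Ici.mp hx) with rfl | h
        · simp only [tildePhi, if_neg (lt_irrefl (1:ℝ))]
          norm_num
        · simp [tildePhi, h]
      · simp only [tildePhi, if_neg (lt_irrefl (1:ℝ))]
        norm_num
    have := hleft.union hright
    rw [Set.Iic_union_Ici] at this
    exact this.hasDerivAt Filter.univ_mem
  · rw [if_pos hu]
    refine (hF_aux hdiff u).congr_of_eventuallyEq ?_
    filter_upwards [Ioi_mem_nhds hu] with x hx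
    simp [tildePhi, Set.mem_Ioi.mp hx]

lemma bar_hasDerivAt (hdiff : Differentiable ℝ Φ) (hd0 : 0 < deriv Φ 0) (u : ℝ) :
    HasDerivAt (barPhi Φ)
      (if 1 < u then -deriv Φ (1 - u) / deriv Φ 0
        else if u < -1 then -deriv Φ (-1 - u) / deriv Φ 0 else -1) u := by
  have hne := ne_of_gt hd0
  rcases lt_trichotomy u 1 with hu | rfl | hu
  · rcases lt_trichotomy u (-1) with hv | rfl | hv
    · rw [if_neg (not_lt.mpr hu.le), if_pos hv]
      refine (hG_aux hdiff u).congr_of_eventuallyEq ?_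
      filter_upwards [Iio_mem_nhds hv] with x hx
      have hx' := Set.mem_Iio.mp hx
      have hx1 : ¬ (1:ℝ) < x := by linarith
      simp only [barPhi, if_neg hx1, if_pos hx']
    · rw [if_neg (not_lt.mpr hu.le), if_neg (lt_irrefl (-1))]
      have hleft : HasDerivWithinAt (barPhi Φ) (-1) (Set.Iic (-1)) (-1) := by
        refine (hd2_aux hne ▸ (hG_aux hdiff (-1)).hasDerivWithinAt).congr ?_ ?_
        · intro x hx
          rcases eq_or_lt_of_le (Set.mem_Iic.mp hx) with rfl | h
          · have h1 : ¬ (1:ℝ) < -1 := by norm_num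
            simp only [barPhi, if_neg h1, if_neg (lt_irrefl (-1:ℝ))]
            norm_num [add_comm]
          · have hx1 : ¬ (1:ℝ) < x := by linarith
            simp only [barPhi, if_neg hx1, if_pos h]
        · have h1 : ¬ (1:ℝ) < -1 := by norm_num
          simp only [barPhi, if_neg h1, if_neg (lt_irrefl (-1:ℝ))]
          norm_num [add_comm]
      have hmid : HasDerivWithinAt (barPhi Φ) (-1) (Set.Icc (-1) 1) (-1) := by
        refine ((hL_aux Φ (-1)).hasDerivWithinAt).congr ?_ ?_
        · intro x hx
          have h1 : ¬ (1:ℝ) < x := not_lt.mpr hx.2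
          have h2 : ¬ x < -1 := not_lt.mpr hx.1
          simp only [barPhi, if_neg h1, if_neg h2]
        · have h1 : ¬ (1:ℝ) < -1 := by norm_num
          simp only [barPhi, if_neg h1, if_neg (lt_irrefl (-1:ℝ))]
      have := hleft.union hmid
      rw [Set.Iic_union_Icc_eq_Iic (by norm_num : (-1:ℝ) ≤ 1)] at this
      exact this.hasDerivAt (Iic_mem_nhds (by norm_num))
    · rw [if_neg (not_lt.mpr hu.le), if_neg (not_lt.mpr hv.le)]
      refine (hL_aux Φ u).congr_of_eventuallyEq ?_
      filter_upwards [Ioo_mem_nhds hv hu] with x hx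
      simp only [barPhi, if_neg (not_lt.mpr (Set.mem_Ioo.mp hx).2.le),
        if_neg (not_lt.mpr (Set.mem_Ioo.mp hx).1.le)]
  · rw [if_neg (lt_irrefl 1)]
    rw [if_neg (by norm_num : ¬ (1:ℝ) < -1)]
    have hmid : HasDerivWithinAt (barPhi Φ) (-1) (Set.Icc (-1) 1) 1 := by
      refine ((hL_aux Φ 1).hasDerivWithinAt).congr ?_ ?_
      · intro x hx
        simp only [barPhi, if_neg (not_lt.mpr hx.2), if_neg (not_lt.mpr hx.1)]
      · simp only [barPhi, if_neg (lt_irrefl (1:ℝ)),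
          if_neg (by norm_num : ¬ (1:ℝ) < -1)]
    have hright : HasDerivWithinAt (barPhi Φ) (-1) (Set.Ici 1) 1 := by
      refine (hd1_aux hne ▸ (hF_aux hdiff 1).hasDerivWithinAt).congr ?_ ?_
      · intro x hx
        rcases eq_or_lt_of_le (Set.mem_Ici.mp hx) with rfl | h
        · simp only [barPhi, if_neg (lt_irrefl (1:ℝ)),
            if_neg (by norm_num : ¬ (1:ℝ) < -1)]
          norm_num
        · simp [barPhi, h]
      · simp only [barPhi, if_neg (lt_irrefl (1:ℝ)),
          if_neg (by norm_num : ¬ (1:ℝ) < -1)]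
        norm_num
    have := hmid.union hright
    rw [Set.Icc_union_Ici_eq_Ici (by norm_num : (-1:ℝ) ≤ 1)] at this
    exact this.hasDerivAt (Ici_mem_nhds (by norm_num))
  · rw [if_pos hu]
    refine (hF_aux hdiff u).congr_of_eventuallyEq ?_
    filter_upwards [Ioi_mem_nhds hu] with x hx
    simp [barPhi, Set.mem_Ioi.mp hx]

/-- The key one-dimensional fact: both surrogates are convex and `C¹`. -/
lemma surrogate_convex_contDiff (hconv : ConvexOn ℝ Set.univ Φ)
    (hdiff : Differentiable ℝ Φ) (hd0 : 0 < deriv Φ 0)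
    (φ : ℝ → ℝ) (hφ : φ = barPhi Φ ∨ φ = tildePhi Φ) :
    ConvexOn ℝ Set.univ φ ∧ ContDiff ℝ 1 φ := by
  have hne := ne_of_gt hd0
  have hmono : Monotone (deriv Φ) :=
    monotoneOn_univ.mp (hconv.monotoneOn_deriv (fun x _ => hdiff x))
  have hgcont : Continuous (deriv Φ) := continuous_deriv_of_monotone hdiff hmono
  have key1 : ∀ w : ℝ, w ≤ 0 → -1 ≤ -deriv Φ w / deriv Φ 0 := by
    intro w hw
    calc (-1:ℝ) = -deriv Φ 0 / deriv Φ 0 := by rw [neg_div, div_self hne]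
      _ ≤ -deriv Φ w / deriv Φ 0 := by gcongr; exact hmono hw
  have key2 : ∀ w : ℝ, 0 ≤ w → -deriv Φ w / deriv Φ 0 ≤ -1 := by
    intro w hw
    calc -deriv Φ w / deriv Φ 0 ≤ -deriv Φ 0 / deriv Φ 0 := by
          gcongr; exact hmono hw
      _ = -1 := by rw [neg_div, div_self hne]
  have hAcont : Continuous (fun u : ℝ => -deriv Φ (1 - u) / deriv Φ 0) :=
    ((hgcont.comp (continuous_const.sub continuous_id)).neg).div_const _
  have hBcont : Continuous (fun u : ℝ => -deriv Φ (-1 - u) / deriv Φ 0) :=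
    ((hgcont.comp (continuous_const.sub continuous_id)).neg).div_const _
  rcases hφ with rfl | rfl
  · -- barPhi
    refine convex_contDiff_of_hasDerivAt (bar_hasDerivAt hdiff hd0) ?_ ?_
    · have hrw : (fun u : ℝ => if 1 < u then -deriv Φ (1 - u) / deriv Φ 0
          else if u < -1 then -deriv Φ (-1 - u) / deriv Φ 0 else -1)
          = fun u : ℝ => if u ≤ 1 then
              (if -1 ≤ u then (-1:ℝ) else -deriv Φ (-1 - u) / deriv Φ 0)
            else -deriv Φ (1 - u) / deriv Φ 0 := by
        funext u
        by_cases h : 1 < u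
        · rw [if_pos h, if_neg (not_le.mpr h)]
        · rw [if_neg h, if_pos (not_lt.mp h)]
          by_cases h2 : u < -1
          · rw [if_pos h2, if_neg (not_le.mpr h2)]
          · rw [if_neg h2, if_pos (not_lt.mp h2)]
      rw [hrw]
      refine Continuous.if_le ?_ hAcont continuous_id continuous_const ?_
      · refine Continuous.if_le continuous_const hBcont continuous_const
          continuous_id ?_
        rintro x hx
        rw [← hx]
        exact (hd2_aux hne).symm
      · rintro x hx
        rw [if_pos (by rw [hx]; norm_num : (-1:ℝ) ≤ x), hx]
        exact (hd1_aux hne).symm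
    · intro u v huv
      dsimp only
      by_cases hv : 1 < v
      · rw [if_pos hv]
        by_cases hu : 1 < u
        · rw [if_pos hu]
          gcongr
          exact hmono (by linarith)
        · rw [if_neg hu]
          have h2 : -1 ≤ -deriv Φ (1 - v) / deriv Φ 0 := key1 _ (by linarith)
          by_cases h3 : u < -1
          · rw [if_pos h3]
            exact le_trans (key2 _ (by linarith)) h2
          · rw [if_neg h3]
            exact h2
      · rw [if_neg hv]
        have hu : ¬ 1 < u := fun h => hv (lt_of_lt_of_le h huv)
        rw [if_neg hu]
        by_cases hv2 : v < -1
        · rw [if_pos hv2, if_pos (lt_of_le_of_lt huv hv2)]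
          gcongr
          exact hmono (by linarith)
        · rw [if_neg hv2]
          by_cases hu2 : u < -1
          · rw [if_pos hu2]
            exact key2 _ (by linarith)
          · rw [if_neg hu2]
  · -- tildePhi
    refine convex_contDiff_of_hasDerivAt (tilde_hasDerivAt hdiff hd0) ?_ ?_
    · have hrw : (fun u : ℝ => if 1 < u then -deriv Φ (1 - u) / deriv Φ 0 else (-1:ℝ))
          = fun u : ℝ => if u ≤ 1 then (-1:ℝ) else -deriv Φ (1 - u) / deriv Φ 0 := by
        funext u
        by_cases h : 1 < u
        · rw [if_pos h, if_neg (not_le.mpr h)]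
        · rw [if_neg h, if_pos (not_lt.mp h)]
      rw [hrw]
      refine Continuous.if_le continuous_const hAcont continuous_id continuous_const ?_
      rintro x hx
      rw [hx]
      exact (hd1_aux hne).symm
    · intro u v huv
      dsimp only
      by_cases hv : 1 < v
      · rw [if_pos hv]
        by_cases hu : 1 < u
        · rw [if_pos hu]
          gcongr
          exact hmono (by linarith)
        · rw [if_neg hu]
          exact key1 _ (by linarith)
      · rw [if_neg hv, if_neg (fun h => hv (lt_of_lt_of_le h huv))]

end Aux

/-- for a finite label set `Y` with at least two elements, a fixed label `y`,
and `φ ∈ {Φ̄, Φ̃}`, the multi-class sum loss `L(v) = ∑_{y' ≠ y} φ(v(y) - v(y'))` is convex,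
and is continuously differentiable as a function on the Euclidean space `ℝ^Y`. -/
theorem multiclass_sum_loss_convex_smooth
    {Y : Type*} [Fintype Y] [DecidableEq Y] (hY : 1 < Fintype.card Y) (y : Y)
    (Φ : ℝ → ℝ) (hconv : ConvexOn ℝ Set.univ Φ) (hdiff : Differentiable ℝ Φ)
    (hnn : ∀ u, 0 ≤ Φ u) (hd0 : 0 < deriv Φ 0)
    (φ : ℝ → ℝ) (hφ : φ = barPhi Φ ∨ φ = tildePhi Φ) :
    ConvexOn ℝ Set.univ
      (fun v : Y → ℝ => ∑ y' ∈ Finset.univ.erase y, φ (v y - v y')) ∧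
    ContDiff ℝ 1
      (fun v : EuclideanSpace ℝ Y => ∑ y' ∈ Finset.univ.erase y, φ (v y - v y')) := by
  obtain ⟨hφconv, hφsmooth⟩ := surrogate_convex_contDiff hconv hdiff hd0 φ hφ
  constructor
  · have hterm : ∀ a : Y, ConvexOn ℝ Set.univ (fun v : Y → ℝ => φ (v y - v a)) := by
      intro a
      have := hφconv.comp_linearMap
        ((LinearMap.proj y : (Y → ℝ) →ₗ[ℝ] ℝ) - LinearMap.proj a)
      exact this
    have : ∀ s : Finset Y,
        ConvexOn ℝ Set.univ (fun v : Y → ℝ => ∑ y' ∈ s, φ (v y - v y')) := by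
      intro s
      induction s using Finset.induction_on with
      | empty => simpa using convexOn_const 0 convex_univ
      | @insert a s ha ih =>
        simp only [Finset.sum_insert ha]
        exact (hterm a).add ih
    exact this _
  · refine ContDiff.sum fun i _ => ?_
    exact hφsmooth.comp
      (((EuclideanSpace.proj y : EuclideanSpace ℝ Y →L[ℝ] ℝ)
        - EuclideanSpace.proj i).contDiff)
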